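/- Let $k = \mathbb{F}_q$ be a finite field of characteristic $2$ with $q$ elements, and for $x \in k$ let $\sqrt{x}$ denote its unique square root in $k$. Let $X = \{(a,b,c,d,e,f) \in k^6 \mid a \neq 0,\ c \neq 0\}$, and for $t \in k^*$, $u \in k$ define $\gamma_{t,u}(a,b,c,d,e,f) = (a t^{-6},\ (b+eu+cu^2)t^2,\ c t^{10},\ (d+\sqrt{u}+fu)t^{-2},\ e t^6,\ f t^2)$. These maps send $X$ to itself, and the number of equivalence classes of $X$ under the relation generated by $Q \sim \gamma_{t,u}(Q)$ for all $t \in k^*, u \in k$ equals $q^4 - 2q^2 + q$. -/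

import Mathlib

/-- The transformation `γ_{t,u}` on coefficient tuples `(a,b,c,d,e,f)`:
`γ_{t,u}(a,b,c,d,e,f) = (at⁻⁶, (b+eu+cu²)t², ct¹⁰, (d+√u+fu)t⁻², et⁶, ft²)`,
where `sqrt` is the square-root function of `k`. -/
def stmt18Gamma (k : Type) [Field k] (sqrt : k → k) (t u : k) (v : Fin 6 → k) :
    Fin 6 → k :=
  ![v 0 * t⁻¹ ^ 6, (v 1 + v 4 * u + v 2 * u ^ 2) * t ^ 2, v 2 * t ^ 10,
    (v 3 + sqrt u + v 5 * u) * t⁻¹ ^ 2, v 4 * t ^ 6, v 5 * t ^ 2]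

namespace Stmt18Aux

/-- A bundled square-root function. -/
class Sqrt18 (k : Type) [Field k] : Type where
  sqrt : k → k
  hsqrt : ∀ x : k, sqrt x ^ 2 = x

/-- The set `X`. -/
abbrev S18 (k : Type) [Field k] := {v : Fin 6 → k // v 0 ≠ 0 ∧ v 2 ≠ 0}

/-- The group `k* ⋉ k` acting via `γ`. -/
@[ext] structure G18 (k : Type) [Field k] : Type where
  t : kˣ
  u : k

variable {k : Type} [Field k]

instance : Mul (G18 k) := ⟨fun g h => ⟨g.t * h.t, h.u + (h.t : k) ^ 4 * g.u⟩⟩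
instance : One (G18 k) := ⟨⟨1, 0⟩⟩
instance : Inv (G18 k) := ⟨fun g => ⟨g.t⁻¹, -(((g.t : k))⁻¹ ^ 4 * g.u)⟩⟩

@[simp] lemma mul_t (g h : G18 k) : (g * h).t = g.t * h.t := rfl
@[simp] lemma mul_u (g h : G18 k) : (g * h).u = h.u + (h.t : k) ^ 4 * g.u := rfl
@[simp] lemma one_t : (1 : G18 k).t = 1 := rfl
@[simp] lemma one_u : (1 : G18 k).u = 0 := rfl
@[simp] lemma inv_t (g : G18 k) : g⁻¹.t = g.t⁻¹ := rfl
@[simp] lemma inv_u (g : G18 k) : g⁻¹.u = -(((g.t : k))⁻¹ ^ 4 * g.u) := rfl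

instance : Group (G18 k) where
  mul_assoc a b c := by
    ext
    · simp [mul_t, mul_assoc]
    · show c.u + (c.t : k) ^ 4 * (b.u + (b.t : k) ^ 4 * a.u)
        = (c.u + (c.t : k) ^ 4 * b.u) + ((b.t : k) * (c.t : k)) ^ 4 * a.u
      ring
  one_mul g := by
    ext
    · simp [mul_t, one_t]
    · show g.u + (g.t : k) ^ 4 * 0 = g.u
      ring
  mul_one g := by
    ext
    · simp [mul_t, one_t]
    · show (0 : k) + (1 : kˣ) ^ 4 * g.u = g.u
      push_cast
      ring
  inv_mul_cancel g := by
    ext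
    · show ((g.t⁻¹ * g.t : kˣ) : k) = ((1 : kˣ) : k)
      simp
    · show g.u + (g.t : k) ^ 4 * -(((g.t : k))⁻¹ ^ 4 * g.u) = 0
      have h : (g.t : k) ≠ 0 := g.t.ne_zero
      field_simp
      ring

def g18Equiv : G18 k ≃ kˣ × k :=
  ⟨fun g => (g.t, g.u), fun p => ⟨p.1, p.2⟩, fun _ => rfl, fun _ => rfl⟩

instance [Finite k] : Finite (G18 k) := Finite.of_equiv _ g18Equiv.symm

section CharTwoAction

variable [CharP k 2] [Sqrt18 k]

local notation "sq" => (Sqrt18.sqrt : k → k)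

lemma sq_inj {x y : k} (h : x ^ 2 = y ^ 2) : x = y := by
  have h2 : (x + y) ^ 2 = 0 := by
    rw [CharTwo.add_sq, h, ← CharTwo.add_sq, CharTwo.add_self_eq_zero]
    norm_num
  have h3 : x + y = 0 :=
    pow_eq_zero_iff (n := 2) (by norm_num) |>.mp h2
  have two : (2 : k) = 0 := by
    have := CharP.cast_eq_zero k 2
    exact_mod_cast this
  linear_combination h3 - y * two

lemma sqrt_spec (x : k) : sq x ^ 2 = x := Sqrt18.hsqrt x

lemma sqrt_unique {x y : k} (h : y ^ 2 = x) : sq x = y :=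
  sq_inj (by rw [sqrt_spec, h])

lemma sqrt_zero : sq 0 = 0 := sqrt_unique (by ring)

lemma sqrt_add (x y : k) : sq (x + y) = sq x + sq y :=
  sqrt_unique (by rw [CharTwo.add_sq, sqrt_spec, sqrt_spec])

lemma sqrt_pow4 (s x : k) : sq (s ^ 4 * x) = s ^ 2 * sq x :=
  sqrt_unique (by rw [mul_pow, ← pow_mul, sqrt_spec])

instance : SMul (G18 k) (S18 k) :=
  ⟨fun g v => ⟨stmt18Gamma k sq (g.t : k) g.u v.1, by
    constructor
    · show v.1 0 * ((g.t : k))⁻¹ ^ 6 ≠ 0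
      exact mul_ne_zero v.2.1 (pow_ne_zero _ (inv_ne_zero g.t.ne_zero))
    · show v.1 2 * (g.t : k) ^ 10 ≠ 0
      exact mul_ne_zero v.2.2 (pow_ne_zero _ g.t.ne_zero)⟩⟩

lemma smul_val (g : G18 k) (v : S18 k) :
    (g • v).1 = stmt18Gamma k sq (g.t : k) g.u v.1 := rfl

/-- The action of `G18 k` on `S18 k` by `γ`. -/
instance : MulAction (G18 k) (S18 k) where
  one_smul v := by
    apply Subtype.ext
    rw [smul_val]
    funext i
    fin_cases i <;> simp [stmt18Gamma, sqrt_zero] <;> rfl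
  mul_smul g h v := by
    apply Subtype.ext
    rw [smul_val, smul_val, smul_val]
    have hs : (h.t : k) ≠ 0 := h.t.ne_zero
    have ht : (g.t : k) ≠ 0 := g.t.ne_zero
    funext i
    fin_cases i
    · show v.1 0 * (((g.t : k)) * (h.t : k))⁻¹ ^ 6
        = v.1 0 * ((h.t : k))⁻¹ ^ 6 * ((g.t : k))⁻¹ ^ 6
      rw [mul_inv]
      ring
    · show (v.1 1 + v.1 4 * (h.u + (h.t : k) ^ 4 * g.u)
          + v.1 2 * (h.u + (h.t : k) ^ 4 * g.u) ^ 2) * ((g.t : k) * (h.t : k)) ^ 2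
        = ((v.1 1 + v.1 4 * h.u + v.1 2 * h.u ^ 2) * (h.t : k) ^ 2
          + v.1 4 * (h.t : k) ^ 6 * g.u
          + v.1 2 * (h.t : k) ^ 10 * g.u ^ 2) * (g.t : k) ^ 2
      rw [CharTwo.add_sq]
      ring
    · show v.1 2 * ((g.t : k) * (h.t : k)) ^ 10
        = v.1 2 * (h.t : k) ^ 10 * (g.t : k) ^ 10
      ring
    · show (v.1 3 + sq (h.u + (h.t : k) ^ 4 * g.u)
          + v.1 5 * (h.u + (h.t : k) ^ 4 * g.u)) * (((g.t : k)) * (h.t : k))⁻¹ ^ 2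
        = ((v.1 3 + sq h.u + v.1 5 * h.u) * ((h.t : k))⁻¹ ^ 2
          + sq g.u + v.1 5 * (h.t : k) ^ 2 * g.u) * ((g.t : k))⁻¹ ^ 2
      rw [sqrt_add, sqrt_pow4, mul_inv]
      field_simp
      ring
    · show v.1 4 * ((g.t : k) * (h.t : k)) ^ 6
        = v.1 4 * (h.t : k) ^ 6 * (g.t : k) ^ 6
      ring
    · show v.1 5 * ((g.t : k) * (h.t : k)) ^ 2
        = v.1 5 * (h.t : k) ^ 2 * (g.t : k) ^ 2
      ring

lemma smul_one_val (g : G18 k) (v : S18 k) (ht : g.t = 1) (i : Fin 6) :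
    (g • v).1 i = stmt18Gamma k sq 1 g.u v.1 i := by
  rw [smul_val, ht, Units.val_one]

end CharTwoAction

section Counting

variable [CharP k 2] [Sqrt18 k] [Fintype k]

local notation "sq" => (Sqrt18.sqrt : k → k)

/-- `X ≃ k* × k* × k⁴`. -/
def sEquiv : S18 k ≃ ({x : k // x ≠ 0} × {x : k // x ≠ 0} × (k × k × k × k)) where
  toFun v := (⟨v.1 0, v.2.1⟩, ⟨v.1 2, v.2.2⟩, (v.1 1, v.1 3, v.1 4, v.1 5))
  invFun p := ⟨![p.1.1, p.2.2.1, p.2.1.1, p.2.2.2.1, p.2.2.2.2.1, p.2.2.2.2.2],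
    p.1.2, p.2.1.2⟩
  left_inv v := by
    apply Subtype.ext
    funext i
    fin_cases i <;> rfl
  right_inv p := rfl

lemma card_ne_zero' : Nat.card {x : k // x ≠ 0} = Fintype.card k - 1 := by
  rw [← Nat.card_congr (unitsEquivNeZero (G₀ := k)), Nat.card_units,
    Nat.card_eq_fintype_card]

lemma card_S18 :
    Nat.card (S18 k) = (Fintype.card k - 1) ^ 2 * Fintype.card k ^ 4 := by
  rw [Nat.card_congr (sEquiv (k := k))]
  simp only [Nat.card_prod, card_ne_zero', Nat.card_eq_fintype_card,
    Fintype.card_prod]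
  ring

lemma two_zero : (2 : k) = 0 := by
  have := CharP.cast_eq_zero k 2
  exact_mod_cast this

lemma fixed_t_ne (g : G18 k) (hg : g.t ≠ 1) :
    IsEmpty (MulAction.fixedBy (S18 k) g) := by
  constructor
  rintro ⟨v, hv⟩
  have hv' : g • v = v := hv
  set t : k := (g.t : k) with htdef
  have ht : t ≠ 0 := g.t.ne_zero
  have h0 : v.1 0 * t⁻¹ ^ 6 = v.1 0 := congrFun (congrArg Subtype.val hv') 0
  have h2 : v.1 2 * t ^ 10 = v.1 2 := congrFun (congrArg Subtype.val hv') 2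
  have h6 : t ^ 6 = 1 := by
    have e : t⁻¹ ^ 6 = 1 :=
      mul_left_cancel₀ v.2.1 (h0.trans (mul_one _).symm)
    rwa [inv_pow, inv_eq_one] at e
  have h10 : t ^ 10 = 1 :=
    mul_left_cancel₀ v.2.2 (h2.trans (mul_one _).symm)
  have h4 : t ^ 4 = 1 := by
    have e : t ^ 6 * t ^ 4 = t ^ 10 := by ring
    rw [h6, one_mul, h10] at e
    exact e
  have h2' : t ^ 2 = 1 := by
    have e : t ^ 4 * t ^ 2 = t ^ 6 := by ring
    rw [h4, one_mul, h6] at e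
    exact e
  have hteq : t = 1 := by
    have e : (t + 1) ^ 2 = 0 := by
      rw [CharTwo.add_sq, h2', one_pow, CharTwo.add_self_eq_zero]
    have e2 : t + 1 = 0 := pow_eq_zero_iff (n := 2) (by norm_num) |>.mp e
    linear_combination e2 - (two_zero (k := k))
  exact hg (Units.ext hteq)

lemma fixed_one :
    Nat.card (MulAction.fixedBy (S18 k) (1 : G18 k)) = Nat.card (S18 k) :=
  Nat.card_congr (Equiv.subtypeUnivEquiv fun v => one_smul (G18 k) v)

/-- The fixed points of `γ_{1,u}` for `u ≠ 0`. -/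
def fixedUEquiv (g : G18 k) (ht : g.t = 1) (hu : g.u ≠ 0) :
    MulAction.fixedBy (S18 k) g ≃ ({x : k // x ≠ 0} × {x : k // x ≠ 0} × (k × k)) where
  toFun w := (⟨w.1.1 0, w.1.2.1⟩, ⟨w.1.1 2, w.1.2.2⟩, (w.1.1 1, w.1.1 3))
  invFun p := ⟨⟨![p.1.1, p.2.2.1, p.2.1.1, p.2.2.2, p.2.1.1 * g.u, sq g.u * g.u⁻¹],
      p.1.2, p.2.1.2⟩, by
    rw [MulAction.mem_fixedBy]
    apply Subtype.ext
    funext i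
    rw [smul_one_val _ _ ht]
    fin_cases i
    · show p.1.1 * (1 : k)⁻¹ ^ 6 = p.1.1
      norm_num
    · show (p.2.2.1 + p.2.1.1 * g.u * g.u + p.2.1.1 * g.u ^ 2) * (1 : k) ^ 2 = p.2.2.1
      linear_combination p.2.1.1 * g.u ^ 2 * (two_zero (k := k))
    · show p.2.1.1 * (1 : k) ^ 10 = p.2.1.1
      norm_num
    · show (p.2.2.2 + sq g.u + sq g.u * g.u⁻¹ * g.u) * (1 : k)⁻¹ ^ 2 = p.2.2.2
      have e : sq g.u * g.u⁻¹ * g.u = sq g.u := by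
        field_simp
      linear_combination e + sq g.u * (two_zero (k := k))
    · show p.2.1.1 * g.u * (1 : k) ^ 6 = p.2.1.1 * g.u
      norm_num
    · show sq g.u * g.u⁻¹ * (1 : k) ^ 2 = sq g.u * g.u⁻¹
      norm_num⟩
  left_inv w := by
    have hv' : g • w.1 = w.1 := w.2
    have h1 : (w.1.1 1 + w.1.1 4 * g.u + w.1.1 2 * g.u ^ 2) * ((g.t : k)) ^ 2 = w.1.1 1 :=
      congrFun (congrArg Subtype.val hv') 1
    have h3 : (w.1.1 3 + sq g.u + w.1.1 5 * g.u) * ((g.t : k))⁻¹ ^ 2 = w.1.1 3 :=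
      congrFun (congrArg Subtype.val hv') 3
    rw [ht, Units.val_one] at h1 h3
    have h1' : w.1.1 4 * g.u = w.1.1 2 * g.u * g.u := by
      linear_combination h1 - w.1.1 2 * g.u ^ 2 * (two_zero (k := k))
    have he : w.1.1 4 = w.1.1 2 * g.u := mul_right_cancel₀ hu h1'
    have h3' : w.1.1 5 * g.u = sq g.u := by
      linear_combination h3 - sq g.u * (two_zero (k := k))
    have hf : w.1.1 5 = sq g.u * g.u⁻¹ := by
      rw [← h3', mul_assoc, mul_inv_cancel₀ hu, mul_one]
    apply Subtype.ext
    apply Subtype.ext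
    funext i
    fin_cases i
    · rfl
    · rfl
    · rfl
    · rfl
    · exact he.symm
    · exact hf.symm
  right_inv p := rfl

lemma fixed_u (g : G18 k) (ht : g.t = 1) (hu : g.u ≠ 0) :
    Nat.card (MulAction.fixedBy (S18 k) g)
      = (Fintype.card k - 1) ^ 2 * Fintype.card k ^ 2 := by
  rw [Nat.card_congr (fixedUEquiv g ht hu)]
  simp only [Nat.card_prod, card_ne_zero', Nat.card_eq_fintype_card,
    Fintype.card_prod]
  ring

open MulAction in
lemma burnside_count :
    Nat.card (Quotient (MulAction.orbitRel (G18 k) (S18 k)))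
        * ((Fintype.card k - 1) * Fintype.card k)
      = (Fintype.card k - 1) ^ 2 * Fintype.card k ^ 4
        + (Fintype.card k - 1) * ((Fintype.card k - 1) ^ 2 * Fintype.card k ^ 2) := by
  classical
  letI : Fintype (G18 k) := Fintype.ofFinite _
  letI : Fintype (S18 k) := Fintype.ofFinite _
  letI : ∀ g : G18 k, Fintype (MulAction.fixedBy (S18 k) g) := fun _ => Fintype.ofFinite _
  letI : Fintype (Quotient (MulAction.orbitRel (G18 k) (S18 k))) := Fintype.ofFinite _
  set q := Fintype.card k with hq
  set N1 := (q - 1) ^ 2 * q ^ 4 with hN1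
  set N2 := (q - 1) ^ 2 * q ^ 2 with hN2
  have hb := MulAction.sum_card_fixedBy_eq_card_orbits_mul_card_group (G18 k) (S18 k)
  have key : ∀ g : G18 k, Fintype.card (MulAction.fixedBy (S18 k) g)
      = if g.t = 1 then (if g.u = 0 then N1 else N2) else 0 := by
    intro g
    rw [← Nat.card_eq_fintype_card]
    by_cases h1 : g.t = 1
    · by_cases h2 : g.u = 0
      · have hgone : g = 1 := G18.ext h1 h2
        rw [hgone, fixed_one, card_S18, hN1]
        simp [hq]
      · rw [fixed_u g h1 h2, hN2]
        simp [h1, h2, hq]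
    · haveI := fixed_t_ne g h1
      rw [Nat.card_of_isEmpty]
      simp [h1]
  have hsum : (∑ g : G18 k, Fintype.card (MulAction.fixedBy (S18 k) g))
      = N1 + (q - 1) * N2 := by
    rw [Finset.sum_congr rfl fun g _ => key g]
    rw [← Equiv.sum_comp (g18Equiv (k := k)).symm
      (fun g => if g.t = 1 then (if g.u = 0 then N1 else N2) else 0)]
    have : ∀ p : kˣ × k, (if ((g18Equiv (k := k)).symm p).t = 1 then
        (if ((g18Equiv (k := k)).symm p).u = 0 then N1 else N2) else 0)
        = if p.1 = 1 then (if p.2 = 0 then N1 else N2) else 0 := fun p => rfl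
    rw [Finset.sum_congr rfl fun p _ => this p]
    rw [Fintype.sum_prod_type]
    have hrow : ∀ t : kˣ, (∑ u : k, if t = 1 then (if u = 0 then N1 else N2) else 0)
        = if t = 1 then (∑ u : k, if u = 0 then N1 else N2) else 0 := by
      intro t
      by_cases h : t = 1 <;> simp [h]
    rw [Finset.sum_congr rfl fun t _ => hrow t,
      Finset.sum_ite_eq' Finset.univ (1 : kˣ)
        (fun _ => ∑ u : k, if u = 0 then N1 else N2), if_pos (Finset.mem_univ _)]
    rw [← Finset.add_sum_erase Finset.univ _ (Finset.mem_univ (0 : k)), if_pos rfl]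
    congr 1
    rw [Finset.sum_congr rfl fun u hu => if_neg (Finset.ne_of_mem_erase hu),
      Finset.sum_const, Finset.card_erase_of_mem (Finset.mem_univ _),
      Finset.card_univ, smul_eq_mul]
  rw [hsum] at hb
  have hcardG : Fintype.card (G18 k) = (q - 1) * q := by
    rw [← Nat.card_eq_fintype_card, Nat.card_congr (g18Equiv (k := k)),
      Nat.card_prod, Nat.card_units, Nat.card_eq_fintype_card]
  rw [hcardG, ← Nat.card_eq_fintype_card] at hb
  omega

end Counting

end Stmt18Aux

/-- Let `k = 𝔽_q` be a finite field of characteristic 2, with square-root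
function `sqrt`. The maps `γ_{t,u}` (for `t ∈ k*`, `u ∈ k`) send
`X = {(a,…,f) ∈ k⁶ | a ≠ 0, c ≠ 0}` to itself, and the number of equivalence
classes of `X` under the relation generated by `Q ∼ γ_{t,u}(Q)` equals
`q⁴ - 2q² + q`. -/
theorem stmt_18 (k : Type) [Field k] [Fintype k] [CharP k 2] (q : ℕ)
    (hq : Fintype.card k = q) (sqrt : k → k) (hsqrt : ∀ x : k, sqrt x ^ 2 = x) :
    (∀ v : Fin 6 → k, v 0 ≠ 0 → v 2 ≠ 0 → ∀ t u : k, t ≠ 0 →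
        stmt18Gamma k sqrt t u v 0 ≠ 0 ∧ stmt18Gamma k sqrt t u v 2 ≠ 0) ∧
    (Nat.card (Quot fun (x y : {v : Fin 6 → k // v 0 ≠ 0 ∧ v 2 ≠ 0}) =>
        ∃ t u : k, t ≠ 0 ∧ stmt18Gamma k sqrt t u x.1 = y.1) : ℤ)
      = q ^ 4 - 2 * q ^ 2 + q := by
  classical
  letI : Stmt18Aux.Sqrt18 k := ⟨sqrt, hsqrt⟩
  subst hq
  constructor
  · intro v h0 h2 t u ht
    constructor
    · show v 0 * t⁻¹ ^ 6 ≠ 0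
      exact mul_ne_zero h0 (pow_ne_zero _ (inv_ne_zero ht))
    · show v 2 * t ^ 10 ≠ 0
      exact mul_ne_zero h2 (pow_ne_zero _ ht)
  · have hrel : ∀ a b : Stmt18Aux.S18 k,
        (∃ t u : k, t ≠ 0 ∧ stmt18Gamma k sqrt t u a.1 = b.1)
          ↔ a ∈ MulAction.orbit (Stmt18Aux.G18 k) b := by
      intro a b
      constructor
      · rintro ⟨t, u, ht, hg⟩
        have hga : (⟨Units.mk0 t ht, u⟩ : Stmt18Aux.G18 k) • a = b := Subtype.ext hg
        exact MulAction.mem_orbit_iff.mpr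
          ⟨(⟨Units.mk0 t ht, u⟩ : Stmt18Aux.G18 k)⁻¹, by rw [← hga, inv_smul_smul]⟩
      · intro h
        obtain ⟨g, hg⟩ := MulAction.mem_orbit_iff.mp h
        refine ⟨((g⁻¹).t : k), (g⁻¹).u, Units.ne_zero _, ?_⟩
        have hia : g⁻¹ • a = b := by rw [← hg, inv_smul_smul]
        exact congrArg Subtype.val hia
    have hcongr := Nat.card_congr
      (Quot.congrRight hrel :
        (Quot fun (x y : {v : Fin 6 → k // v 0 ≠ 0 ∧ v 2 ≠ 0}) =>
          ∃ t u : k, t ≠ 0 ∧ stmt18Gamma k sqrt t u x.1 = y.1)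
        ≃ Quotient (MulAction.orbitRel (Stmt18Aux.G18 k) (Stmt18Aux.S18 k)))
    rw [hcongr]
    set q := Fintype.card k with hq
    set n := Nat.card (Quotient (MulAction.orbitRel (Stmt18Aux.G18 k) (Stmt18Aux.S18 k)))
      with hn
    have hb := Stmt18Aux.burnside_count (k := k)
    have h2q : 2 ≤ q := by
      rw [hq]
      exact Fintype.one_lt_card
    have h1q : (1 : ℕ) ≤ q := le_trans one_le_two h2q
    have hbz : (n : ℤ) * (((q : ℤ) - 1) * q)
        = ((q : ℤ) - 1) ^ 2 * q ^ 4 + ((q : ℤ) - 1) * (((q : ℤ) - 1) ^ 2 * q ^ 2) := by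
      have := congrArg (fun m : ℕ => (m : ℤ)) hb
      push_cast [Nat.cast_sub h1q] at this
      exact_mod_cast this
    have hfac : (n : ℤ) * (((q : ℤ) - 1) * q)
        = ((q : ℤ) ^ 4 - 2 * q ^ 2 + q) * (((q : ℤ) - 1) * q) := by
      rw [hbz]; ring
    have hne : (((q : ℤ) - 1) * q) ≠ 0 := by
      have : (2 : ℤ) ≤ (q : ℤ) := by exact_mod_cast h2q
      nlinarith
    exact mul_right_cancel₀ hne hfac
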